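/- Let n ≥ 1 and let f : ℝⁿ → ℝ be differentiable with gradient ∇f Lipschitz continuous with constant L ≥ 0. Let y₀, y₁, …, y_n ∈ ℝⁿ and ε > 0 be such that ‖y_i − y₀‖ ≤ ε for i = 1, …, n, and such that the n×n real matrix M whose i-th row is (y_i − y₀)ᵀ is invertible. Define δf ∈ ℝⁿ by (δf)_i = f(y_i) − f(y₀) and the simplex gradient ∇_ε f(Y) = M⁻¹ δf. Then ‖∇_ε f(Y) − ∇f(y₀)‖ ≤ (√n · L / 2) · ε² · ‖M⁻¹‖, where ‖M⁻¹‖ denotes the operator norm of M⁻¹ induced by the Euclidean norm. (This is the simplex-gradient error bound, Theorem 3.2 of the paper, with the explicit constant μ = √n L/2 and ε‖M̂⁻¹‖ = ε²‖M⁻¹‖ for M̂ = M/ε.) -/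

import Mathlib

open scoped RealInnerProductSpace Matrix.Norms.L2Operator
open scoped Matrix

/-- Descent lemma: quadratic Taylor bound for a function with Lipschitz gradient. -/
lemma descent_lemma {n : ℕ} (f : EuclideanSpace ℝ (Fin n) → ℝ)
    (hf : Differentiable ℝ f) (L : ℝ)
    (hlip : ∀ x y : EuclideanSpace ℝ (Fin n),
      ‖gradient f x - gradient f y‖ ≤ L * ‖x - y‖)
    (x h : EuclideanSpace ℝ (Fin n)) :
    |f (x + h) - f x - ⟪gradient f x, h⟫| ≤ L / 2 * ‖h‖ ^ 2 := by
  set g : ℝ → ℝ := fun t => f (x + t • h) - f x - t * ⟪gradient f x, h⟫ with hg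
  set g' : ℝ → ℝ := fun t => ⟪gradient f (x + t • h) - gradient f x, h⟫ with hg'
  have hder : ∀ t : ℝ, HasDerivAt g (g' t) t := by
    intro t
    have h1 : HasDerivAt (fun t : ℝ => x + t • h) h t := by
      simpa using ((hasDerivAt_id t).smul_const h).const_add x
    have h2 : HasFDerivAt f (InnerProductSpace.toDual ℝ _ (gradient f (x + t • h)))
        (x + t • h) :=
      hasGradientAt_iff_hasFDerivAt.mp (hf (x + t • h)).hasGradientAt
    have h3 : HasDerivAt (fun t : ℝ => f (x + t • h))
        ⟪gradient f (x + t • h), h⟫ t := by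
      simpa [InnerProductSpace.toDual_apply_apply, Function.comp_def] using h2.comp_hasDerivAt t h1
    have h4 : HasDerivAt (fun t : ℝ => t * ⟪gradient f x, h⟫)
        ⟪gradient f x, h⟫ t := by
      simpa using (hasDerivAt_id t).mul_const ⟪gradient f x, h⟫
    have := (h3.sub_const (f x)).sub h4
    simpa [hg, hg', inner_sub_left, Pi.sub_def] using this
  set B : ℝ → ℝ := fun t => L * ‖h‖ ^ 2 / 2 * t ^ 2 with hB
  have hBder : ∀ t : ℝ, HasDerivAt B (L * ‖h‖ ^ 2 * t) t := by
    intro t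
    have := (hasDerivAt_pow 2 t).const_mul (L * ‖h‖ ^ 2 / 2)
    simpa [hB] using this.congr_deriv (by ring)
  have hbound : ∀ t ∈ Set.Ico (0 : ℝ) 1, ‖g' t‖ ≤ L * ‖h‖ ^ 2 * t := by
    intro t ht
    have h0 : (0 : ℝ) ≤ t := ht.1
    have h1 : |⟪gradient f (x + t • h) - gradient f x, h⟫|
        ≤ ‖gradient f (x + t • h) - gradient f x‖ * ‖h‖ := abs_real_inner_le_norm _ _
    have h2 : ‖gradient f (x + t • h) - gradient f x‖ ≤ L * (t * ‖h‖) := by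
      have := hlip (x + t • h) x
      simpa [norm_smul, abs_of_nonneg h0] using this
    have hh : (0 : ℝ) ≤ ‖h‖ := norm_nonneg _
    calc ‖g' t‖ ≤ ‖gradient f (x + t • h) - gradient f x‖ * ‖h‖ := by
          simpa [hg', Real.norm_eq_abs] using h1
      _ ≤ L * (t * ‖h‖) * ‖h‖ := by
          exact mul_le_mul_of_nonneg_right h2 hh
      _ = L * ‖h‖ ^ 2 * t := by ring
  have hg0 : ‖g 0‖ ≤ B 0 := by simp [hg, hB]
  have key : ‖g 1‖ ≤ B 1 := by
    refine image_norm_le_of_norm_deriv_right_le_deriv_boundary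
      (f := g) (f' := g') (a := 0) (b := 1)
      (fun t _ => (hder t).continuousAt.continuousWithinAt)
      (fun t _ => (hder t).hasDerivWithinAt) hg0 hBder
      (fun t ht => hbound t ht) ?_
    exact Set.right_mem_Icc.mpr zero_le_one
  have hgone : g 1 = f (x + h) - f x - ⟪gradient f x, h⟫ := by simp [hg]
  have hBone : B 1 = L / 2 * ‖h‖ ^ 2 := by simp [hB]; ring
  rw [← hgone, ← Real.norm_eq_abs, ← hBone]; exact key

lemma euclidean_norm_le {n : ℕ} (v : EuclideanSpace ℝ (Fin n)) (c : ℝ) (hc : 0 ≤ c)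
    (hv : ∀ i, |v i| ≤ c) : ‖v‖ ≤ Real.sqrt n * c := by
  rw [EuclideanSpace.norm_eq]
  have : ∑ i, ‖v i‖ ^ 2 ≤ (n : ℝ) * c ^ 2 := by
    calc ∑ i, ‖v i‖ ^ 2 ≤ ∑ _i : Fin n, c ^ 2 := by
          refine Finset.sum_le_sum fun i _ => ?_
          have := hv i
          rw [Real.norm_eq_abs]
          nlinarith [abs_nonneg (v i)]
      _ = (n : ℝ) * c ^ 2 := by simp [mul_comm]
    
  calc Real.sqrt (∑ i, ‖v i‖ ^ 2) ≤ Real.sqrt ((n : ℝ) * c ^ 2) := Real.sqrt_le_sqrt this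
    _ = Real.sqrt n * c := by
        rw [Real.sqrt_mul (Nat.cast_nonneg n), Real.sqrt_sq hc]

/-- Theorem 3.2: simplex-gradient error bound. If `∇f` is `L`-Lipschitz, the points
`y₀, y₁, …, y_n` have `‖y i - y₀‖ ≤ ε` and the matrix `M` with rows `(y i - y₀)ᵀ` is
invertible, then the simplex gradient `M⁻¹ δf` satisfies
`‖M⁻¹ δf - ∇f(y₀)‖ ≤ (√n · L / 2) · ε² · ‖M⁻¹‖`. -/
theorem simplex_gradient_error_bound
    (n : ℕ) (hn : 1 ≤ n) (f : EuclideanSpace ℝ (Fin n) → ℝ)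
    (hf : Differentiable ℝ f) (L : ℝ) (hL : 0 ≤ L)
    (hlip : ∀ x y : EuclideanSpace ℝ (Fin n),
      ‖gradient f x - gradient f y‖ ≤ L * ‖x - y‖)
    (y₀ : EuclideanSpace ℝ (Fin n)) (y : Fin n → EuclideanSpace ℝ (Fin n))
    (ε : ℝ) (hε : 0 < ε) (hdiam : ∀ i, ‖y i - y₀‖ ≤ ε)
    (M : Matrix (Fin n) (Fin n) ℝ) (hM : ∀ i j, M i j = (y i - y₀) j)
    (hMinv : IsUnit M)
    (δf : Fin n → ℝ) (hδf : ∀ i, δf i = f (y i) - f y₀)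
    (gε : EuclideanSpace ℝ (Fin n)) (hgε : ∀ i, gε i = (M⁻¹ *ᵥ δf) i) :
    ‖gε - gradient f y₀‖ ≤ (Real.sqrt n * L / 2) * ε ^ 2 * ‖M⁻¹‖ := by
  set g0 : EuclideanSpace ℝ (Fin n) := gradient f y₀ with hg0
  have hdet : IsUnit M.det := (Matrix.isUnit_iff_isUnit_det M).mp hMinv
  set v : EuclideanSpace ℝ (Fin n) :=
    (EuclideanSpace.equiv (Fin n) ℝ).symm (fun i => δf i - (M *ᵥ (g0 : Fin n → ℝ)) i) with hv
  -- componentwise bound on v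
  have hvi : ∀ i, |v i| ≤ L / 2 * ε ^ 2 := by
    intro i
    have hcomp : v i = f (y i) - f y₀ - ⟪g0, y i - y₀⟫ := by
      have hmv : (M *ᵥ (g0 : Fin n → ℝ)) i = ⟪g0, y i - y₀⟫ := by
        simp only [Matrix.mulVec, dotProduct, PiLp.inner_apply, RCLike.inner_apply,
          conj_trivial]
        exact Finset.sum_congr rfl fun j _ => by beta_reduce; rw [hM i j]
      simp [hv, hδf i, hmv, EuclideanSpace.equiv]
    have hd := descent_lemma f hf L hlip y₀ (y i - y₀)
    rw [add_sub_cancel] at hd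
    rw [hcomp]
    refine hd.trans ?_
    have h1 : ‖y i - y₀‖ ≤ ε := hdiam i
    have h2 : (0:ℝ) ≤ ‖y i - y₀‖ := norm_nonneg _
    have h3 : ‖y i - y₀‖ ^ 2 ≤ ε ^ 2 := by nlinarith
    nlinarith
  have hvnorm : ‖v‖ ≤ Real.sqrt n * (L / 2 * ε ^ 2) :=
    euclidean_norm_le v _ (by positivity) hvi
  -- gε - g0 = M⁻¹ *ᵥ v
  have hMMv : M⁻¹ *ᵥ (M *ᵥ (g0 : Fin n → ℝ)) = (g0 : Fin n → ℝ) := by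
    rw [Matrix.mulVec_mulVec, Matrix.nonsing_inv_mul M hdet, Matrix.one_mulVec]
  have hrepr : gε - g0 = (EuclideanSpace.equiv (Fin n) ℝ).symm (M⁻¹ *ᵥ (v : Fin n → ℝ)) := by
    ext i
    have : (M⁻¹ *ᵥ (v : Fin n → ℝ)) i
        = (M⁻¹ *ᵥ δf) i - (M⁻¹ *ᵥ (M *ᵥ (g0 : Fin n → ℝ))) i := by
      have : (v : Fin n → ℝ) = δf - (M *ᵥ (g0 : Fin n → ℝ)) := by
        funext j; simp [hv, EuclideanSpace.equiv]
      rw [this, Matrix.mulVec_sub]; simp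
    simp only [PiLp.sub_apply, hgε i]
    rw [show ((EuclideanSpace.equiv (Fin n) ℝ).symm (M⁻¹ *ᵥ (v : Fin n → ℝ))) i
        = (M⁻¹ *ᵥ (v : Fin n → ℝ)) i from rfl, this, hMMv]
  have hbound := Matrix.l2_opNorm_mulVec M⁻¹ v
  rw [← hrepr] at hbound
  have hMn : (0:ℝ) ≤ ‖M⁻¹‖ := norm_nonneg _
  calc ‖gε - g0‖ ≤ ‖M⁻¹‖ * ‖v‖ := hbound
    _ ≤ ‖M⁻¹‖ * (Real.sqrt n * (L / 2 * ε ^ 2)) := by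
        exact mul_le_mul_of_nonneg_left hvnorm hMn
    _ = (Real.sqrt n * L / 2) * ε ^ 2 * ‖M⁻¹‖ := by ring
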